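/- Let π be a random permutation of {1,...,n} from the Mallows(q) distribution and let σ ∈ S_m with m ≤ n. For any fixed position 1 ≤ i ≤ n−m+1, the probability that the standardization of π_i π_{i+1} ... π_{i+m−1} equals σ is q^{inv(σ)}/[m]_q! (independent of i and n). -/

import Mathlib

open scoped Classical

/-- The q-integer `[k]_q = 1 + q + ... + q^(k-1)`. -/
noncomputable def qint (q : ℝ) (k : ℕ) : ℝ := ∑ i ∈ Finset.range k, q ^ i

/-- The q-factorial `[n]_q! = [1]_q [2]_q ⋯ [n]_q`. -/
noncomputable def qfact (q : ℝ) (n : ℕ) : ℝ := ∏ i ∈ Finset.range n, qint q (i + 1)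

/-- The number of inversions of a permutation of `{0, ..., n-1}`. -/
def inversions {n : ℕ} (π : Equiv.Perm (Fin n)) : ℕ :=
  (Finset.univ.filter (fun p : Fin n × Fin n => p.1 < p.2 ∧ π p.2 < π p.1)).card

/-- The pattern `σ ∈ S_m` occurs consecutively in `π ∈ S_n` starting at (0-indexed) position `j`:
the window `π_j, ..., π_{j+m-1}` is order-isomorphic to `σ`. -/
def occursAt {m n : ℕ} (σ : Equiv.Perm (Fin m)) (π : Equiv.Perm (Fin n)) (j : ℕ) : Prop :=
  ∃ h : j + m ≤ n, ∀ a b : Fin m,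
    σ a < σ b ↔
      π ⟨j + (a : ℕ), lt_of_lt_of_le (Nat.add_lt_add_left a.isLt j) h⟩ <
      π ⟨j + (b : ℕ), lt_of_lt_of_le (Nat.add_lt_add_left b.isLt j) h⟩

/-- `π` avoids `σ` as a consecutive pattern. -/
def avoids {m n : ℕ} (σ : Equiv.Perm (Fin m)) (π : Equiv.Perm (Fin n)) : Prop :=
  ∀ j : ℕ, ¬ occursAt σ π j

/-- `P_n(σ, q)`: the probability that a Mallows(q) random permutation of length `n`
avoids `σ` as a consecutive pattern. -/
noncomputable def Pn (m : ℕ) (σ : Equiv.Perm (Fin m)) (q : ℝ) (n : ℕ) : ℝ :=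
  (∑ π ∈ Finset.univ.filter (fun π : Equiv.Perm (Fin n) => avoids σ π),
    q ^ inversions π) / qfact q n

namespace MWP

variable {m n : ℕ}

/-- A strictly-monotone-conjugation uniqueness: two perms of `Fin m` inducing the same order
on their values are equal. -/
lemma perm_eq_of_lt_iff (σ τ : Equiv.Perm (Fin m)) (h : ∀ a b, σ a < σ b ↔ τ a < τ b) :
    σ = τ := by
  have hs : StrictMono (fun x => τ (σ.symm x)) := by
    intro x y hxy
    have hx : σ (σ.symm x) < σ (σ.symm y) := by simpa using hxy
    exact (h (σ.symm x) (σ.symm y)).1 hx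
  have hr : Set.range (fun x => τ (σ.symm x)) = Set.range (id : Fin m → Fin m) := by
    have : Function.Surjective (fun x => τ (σ.symm x)) :=
      τ.surjective.comp σ.symm.surjective
    simp [Set.range_eq_univ.2 this, Set.range_id]
  haveI : WellFoundedLT (Fin m) := IsWellFounded.mk wellFounded_lt
  have heq := (StrictMono.range_inj (β := Fin m) (γ := Fin m) hs strictMono_id).1 hr
  ext a
  have := congrFun heq (σ a)
  simp at this; exact congrArg Fin.val this.symm

end MWP

namespace MWP2
open MWP Equiv Finset

variable {m n : ℕ}

/-- The window embedding `Fin m ↪ Fin n`, `a ↦ i + a`. -/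
def wemb (i : ℕ) (hi : i + m ≤ n) : Fin m ↪ Fin n :=
  ⟨fun a => ⟨i + a, lt_of_lt_of_le (Nat.add_lt_add_left a.isLt i) hi⟩, by
    intro a b hab
    simp only [Fin.mk.injEq] at hab
    exact Fin.ext (by omega)⟩

lemma wemb_lt_iff (i : ℕ) (hi : i + m ≤ n) (a b : Fin m) :
    wemb i hi a < wemb i hi b ↔ a < b := by
  rw [Fin.lt_def, Fin.lt_def]
  change i + (a : ℕ) < i + (b : ℕ) ↔ _
  omega

lemma wemb_val (i : ℕ) (hi : i + m ≤ n) (a : Fin m) : (wemb i hi a : ℕ) = i + a := rfl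

/-- The set of values in the window. -/
noncomputable def wset (i : ℕ) (hi : i + m ≤ n) (π : Perm (Fin n)) : Finset (Fin n) :=
  Finset.image (fun a => π (wemb i hi a)) Finset.univ

lemma wset_card (i : ℕ) (hi : i + m ≤ n) (π : Perm (Fin n)) :
    (wset i hi π).card = m := by
  rw [wset, Finset.card_image_of_injective _ (fun a b h => (wemb i hi).injective (π.injective h))]
  simp

lemma mem_wset (i : ℕ) (hi : i + m ≤ n) (π : Perm (Fin n)) (a : Fin m) :
    π (wemb i hi a) ∈ wset i hi π := Finset.mem_image_of_mem _ (Finset.mem_univ a)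

/-- The standardization (pattern) of the window of `π` of length `m` starting at `i`. -/
noncomputable def patt (i : ℕ) (hi : i + m ≤ n) (π : Perm (Fin n)) : Perm (Fin m) := by
  refine Equiv.ofBijective
    (fun a => ((wset i hi π).orderIsoOfFin (wset_card i hi π)).symm
      ⟨π (wemb i hi a), mem_wset i hi π a⟩) ?_
  rw [Fintype.bijective_iff_injective_and_card]
  refine ⟨?_, rfl⟩
  intro a b hab
  apply (wemb i hi).injective
  apply π.injective
  have := congrArg (fun x => (((wset i hi π).orderIsoOfFin (wset_card i hi π)) x : Fin n)) hab
  simpa using this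

lemma patt_lt_iff (i : ℕ) (hi : i + m ≤ n) (π : Perm (Fin n)) (a b : Fin m) :
    patt i hi π a < patt i hi π b ↔ π (wemb i hi a) < π (wemb i hi b) := by
  rw [patt]
  simp only [Equiv.ofBijective_apply]
  rw [OrderIso.lt_iff_lt]
  exact Subtype.mk_lt_mk

lemma occursAt_iff (i : ℕ) (hi : i + m ≤ n) (σ : Perm (Fin m)) (π : Perm (Fin n)) :
    occursAt σ π i ↔ σ = patt i hi π := by
  constructor
  · rintro ⟨h, hp⟩
    refine perm_eq_of_lt_iff _ _ (fun a b => ?_)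
    rw [hp a b, patt_lt_iff]
    rfl
  · rintro rfl
    refine ⟨hi, fun a b => ?_⟩
    rw [patt_lt_iff]
    rfl

/-- Position `p` lies in the window `[i, i+m)`. -/
def Win (i m : ℕ) (p : Fin n) : Prop := i ≤ (p : ℕ) ∧ (p : ℕ) < i + m

lemma win_wemb (i : ℕ) (hi : i + m ≤ n) (a : Fin m) : Win i m (wemb i hi a) := by
  show i ≤ i + (a : ℕ) ∧ i + (a : ℕ) < i + m
  omega

lemma range_wemb (i : ℕ) (hi : i + m ≤ n) (p : Fin n) :
    p ∈ Set.range (wemb i hi) ↔ Win i m p := by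
  constructor
  · rintro ⟨a, rfl⟩; exact win_wemb i hi a
  · rintro ⟨h1, h2⟩
    exact ⟨⟨(p : ℕ) - i, by omega⟩, Fin.ext (by dsimp only [wemb_val]; omega)⟩

/-- Cross inversions: inversion pairs not both inside the window. -/
noncomputable def crossInv (m i : ℕ) (π : Perm (Fin n)) : ℕ :=
  (Finset.univ.filter (fun p : Fin n × Fin n =>
    (p.1 < p.2 ∧ π p.2 < π p.1) ∧ ¬(Win i m p.1 ∧ Win i m p.2))).card

lemma inversions_split (i : ℕ) (hi : i + m ≤ n) (π : Perm (Fin n)) :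
    inversions π =
      (Finset.univ.filter (fun p : Fin n × Fin n =>
        (p.1 < p.2 ∧ π p.2 < π p.1) ∧ (Win i m p.1 ∧ Win i m p.2))).card + crossInv m i π := by
  have h := Finset.card_filter_add_card_filter_not
    (s := Finset.univ.filter (fun p : Fin n × Fin n => p.1 < p.2 ∧ π p.2 < π p.1))
    (p := fun p => Win i m p.1 ∧ Win i m p.2)
  rw [Finset.filter_filter, Finset.filter_filter] at h
  rw [inversions, crossInv, ← h]

lemma inWin_card (i : ℕ) (hi : i + m ≤ n) (π : Perm (Fin n)) :
    (Finset.univ.filter (fun p : Fin n × Fin n =>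
        (p.1 < p.2 ∧ π p.2 < π p.1) ∧ (Win i m p.1 ∧ Win i m p.2))).card
      = inversions (patt i hi π) := by
  rw [inversions]
  symm
  refine Finset.card_bij' (fun a _ => (wemb i hi a.1, wemb i hi a.2))
    (fun p hp =>
      ((⟨(p.1 : ℕ) - i, by
          simp only [Finset.mem_filter, Finset.mem_univ, true_and] at hp
          have h1 := hp.2.1.1; have h2 := hp.2.1.2; omega⟩ : Fin m),
       (⟨(p.2 : ℕ) - i, by
          simp only [Finset.mem_filter, Finset.mem_univ, true_and] at hp
          have h1 := hp.2.2.1; have h2 := hp.2.2.2; omega⟩ : Fin m)))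
    ?_ ?_ ?_ ?_
  · intro a ha
    simp only [Finset.mem_filter, Finset.mem_univ, true_and] at ha ⊢
    refine ⟨⟨(wemb_lt_iff i hi _ _).2 ha.1, ?_⟩, win_wemb i hi _, win_wemb i hi _⟩
    have := (patt_lt_iff i hi π a.2 a.1).1 ha.2
    exact this
  · intro p hp
    simp only [Finset.mem_filter, Finset.mem_univ, true_and] at hp ⊢
    obtain ⟨⟨h1, h2⟩, ⟨hw1, hw1'⟩, ⟨hw2, hw2'⟩⟩ := hp
    have e1 : wemb i hi ⟨(p.1 : ℕ) - i, by omega⟩ = p.1 := by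
      apply Fin.ext; dsimp only [wemb_val]; omega
    have e2 : wemb i hi ⟨(p.2 : ℕ) - i, by omega⟩ = p.2 := by
      apply Fin.ext; dsimp only [wemb_val]; omega
    constructor
    · rw [← wemb_lt_iff i hi, e1, e2]; exact h1
    · rw [patt_lt_iff i hi, e1, e2]; exact h2
  · intro a ha
    refine Prod.ext ?_ ?_ <;>
      · apply Fin.ext
        dsimp only [wemb_val]
        omega
  · intro p hp
    simp only [Finset.mem_filter, Finset.mem_univ, true_and] at hp
    obtain ⟨-, ⟨hw1, hw1'⟩, ⟨hw2, hw2'⟩⟩ := hp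
    refine Prod.ext ?_ ?_ <;>
      · apply Fin.ext
        dsimp only [wemb_val]
        omega

/-- Extension of `τ : S_m` to `S_n` acting inside the window and fixing the rest. -/
noncomputable def wext (i : ℕ) (hi : i + m ≤ n) (τ : Perm (Fin m)) : Perm (Fin n) :=
  τ.viaEmbedding (wemb i hi)

lemma wext_wemb (i : ℕ) (hi : i + m ≤ n) (τ : Perm (Fin m)) (a : Fin m) :
    wext i hi τ (wemb i hi a) = wemb i hi (τ a) :=
  Equiv.Perm.viaEmbedding_apply τ (wemb i hi) a

lemma wext_of_not_win (i : ℕ) (hi : i + m ≤ n) (τ : Perm (Fin m)) (p : Fin n)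
    (hp : ¬ Win i m p) : wext i hi τ p = p :=
  Equiv.Perm.viaEmbedding_apply_of_notMem τ (wemb i hi) p
    (fun h => hp ((range_wemb i hi p).1 h))

lemma win_wext (i : ℕ) (hi : i + m ≤ n) (τ : Perm (Fin m)) (p : Fin n) :
    Win i m (wext i hi τ p) ↔ Win i m p := by
  by_cases hp : Win i m p
  · obtain ⟨a, rfl⟩ := (range_wemb i hi p).2 hp
    rw [wext_wemb]
    exact iff_of_true (win_wemb i hi _) (win_wemb i hi _)
  · rw [wext_of_not_win i hi τ p hp]

lemma wext_mul (i : ℕ) (hi : i + m ≤ n) (τ₁ τ₂ : Perm (Fin m)) :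
    wext i hi (τ₁ * τ₂) = wext i hi τ₁ * wext i hi τ₂ := by
  unfold wext
  rw [← Equiv.Perm.viaEmbeddingHom_apply, ← Equiv.Perm.viaEmbeddingHom_apply,
    ← Equiv.Perm.viaEmbeddingHom_apply, map_mul]

lemma wext_one (i : ℕ) (hi : i + m ≤ n) : wext i hi (1 : Perm (Fin m)) = 1 := by
  unfold wext
  rw [← Equiv.Perm.viaEmbeddingHom_apply, map_one]

lemma wext_lt (i : ℕ) (hi : i + m ≤ n) (τ : Perm (Fin m)) (p q : Fin n)
    (hpq : p < q) (h : ¬(Win i m p ∧ Win i m q)) : wext i hi τ p < wext i hi τ q := by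
  by_cases hp : Win i m p
  · have hq : ¬ Win i m q := fun hq => h ⟨hp, hq⟩
    rw [wext_of_not_win i hi τ q hq]
    have hw : Win i m (wext i hi τ p) := (win_wext i hi τ p).2 hp
    have : (q : ℕ) ≥ i + m := by
      rcases Nat.lt_or_ge (q : ℕ) (i + m) with h1 | h1
      · exact absurd ⟨le_trans hp.1 (le_of_lt hpq), h1⟩ hq
      · exact h1
    exact Fin.lt_def.2 (by have := hw.2; omega)
  · rw [wext_of_not_win i hi τ p hp]
    by_cases hq : Win i m q
    · have hw : Win i m (wext i hi τ q) := (win_wext i hi τ q).2 hq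
      have hpi : (p : ℕ) < i := by
        rcases Nat.lt_or_ge (p : ℕ) i with h1 | h1
        · exact h1
        · exact absurd ⟨h1, by have := hq.2; have := Fin.lt_def.1 hpq; omega⟩ hp
      exact Fin.lt_def.2 (by have := hw.1; omega)
    · rw [wext_of_not_win i hi τ q hq]
      exact hpq

lemma crossInv_mul (i : ℕ) (hi : i + m ≤ n) (τ : Perm (Fin m)) (π : Perm (Fin n)) :
    crossInv m i (π * wext i hi τ) = crossInv m i π := by
  rw [crossInv, crossInv]
  refine Finset.card_nbij' (fun p => (wext i hi τ p.1, wext i hi τ p.2))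
    (fun p => (wext i hi τ⁻¹ p.1, wext i hi τ⁻¹ p.2)) ?_ ?_ ?_ ?_
  · intro p hp
    rw [Finset.mem_coe, Finset.mem_filter] at hp ⊢
    simp only [Finset.mem_coe, Finset.mem_filter, Finset.mem_univ, true_and, Equiv.Perm.mul_apply] at hp ⊢
    obtain ⟨⟨h1, h2⟩, h3⟩ := hp
    exact ⟨⟨wext_lt i hi τ p.1 p.2 h1 h3, h2⟩,
      by rw [win_wext, win_wext]; exact h3⟩
  · intro p hp
    rw [Finset.mem_coe, Finset.mem_filter] at hp ⊢
    simp only [Finset.mem_coe, Finset.mem_filter, Finset.mem_univ, true_and, Equiv.Perm.mul_apply] at hp ⊢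
    obtain ⟨⟨h1, h2⟩, h3⟩ := hp
    have e1 : wext i hi τ (wext i hi τ⁻¹ p.1) = p.1 := by
      rw [← Equiv.Perm.mul_apply, ← wext_mul]; simp [wext_one]
    have e2 : wext i hi τ (wext i hi τ⁻¹ p.2) = p.2 := by
      rw [← Equiv.Perm.mul_apply, ← wext_mul]; simp [wext_one]
    refine ⟨⟨wext_lt i hi τ⁻¹ p.1 p.2 h1 h3, by rw [e1, e2]; exact h2⟩,
      by rw [win_wext, win_wext]; exact h3⟩
  · intro p hp
    simp only
    rw [← Equiv.Perm.mul_apply, ← Equiv.Perm.mul_apply, ← wext_mul]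
    simp [wext_one]
  · intro p hp
    simp only
    rw [← Equiv.Perm.mul_apply, ← Equiv.Perm.mul_apply, ← wext_mul]
    simp [wext_one]

lemma patt_mul (i : ℕ) (hi : i + m ≤ n) (τ : Perm (Fin m)) (π : Perm (Fin n)) :
    patt i hi (π * wext i hi τ) = patt i hi π * τ := by
  symm
  apply perm_eq_of_lt_iff
  intro a b
  rw [patt_lt_iff]
  simp only [Equiv.Perm.mul_apply, wext_wemb]
  rw [patt_lt_iff]

lemma inversions_one : inversions (1 : Perm (Fin m)) = 0 := by
  rw [inversions, Finset.card_eq_zero]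
  ext p
  simp only [Finset.mem_filter, Finset.mem_univ, true_and, Finset.notMem_empty, iff_false]
  rintro ⟨h1, h2⟩
  simp only [Equiv.Perm.one_apply] at h2
  exact absurd h1 (not_lt.2 (le_of_lt h2))

lemma inversions_eq (i : ℕ) (hi : i + m ≤ n) (π : Perm (Fin n)) :
    inversions π = inversions (patt i hi π) + crossInv m i π := by
  rw [inversions_split i hi, inWin_card i hi]

lemma class_sum (q : ℝ) (i : ℕ) (hi : i + m ≤ n) (σ : Perm (Fin m)) :
    ∑ π ∈ Finset.univ.filter (fun π : Perm (Fin n) => patt i hi π = σ), q ^ inversions π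
      = q ^ inversions σ *
        ∑ π ∈ Finset.univ.filter (fun π : Perm (Fin n) => patt i hi π = 1), q ^ inversions π := by
  rw [Finset.mul_sum]
  refine Finset.sum_nbij' (fun π => π * wext i hi σ⁻¹) (fun π => π * wext i hi σ)
    ?_ ?_ ?_ ?_ ?_
  · intro π hπ
    simp only [Finset.mem_filter, Finset.mem_univ, true_and] at hπ ⊢
    rw [patt_mul, hπ]
    simp
  · intro π hπ
    simp only [Finset.mem_filter, Finset.mem_univ, true_and] at hπ ⊢
    rw [patt_mul, hπ]
    simp
  · intro π hπ
    rw [mul_assoc, ← wext_mul]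
    simp [wext_one]
  · intro π hπ
    rw [mul_assoc, ← wext_mul]
    simp [wext_one]
  · intro π hπ
    simp only [Finset.mem_filter, Finset.mem_univ, true_and] at hπ
    have h1 : inversions π = inversions σ + crossInv m i π := by
      rw [inversions_eq i hi π, hπ]
    have h2 : inversions (π * wext i hi σ⁻¹) = crossInv m i π := by
      rw [inversions_eq i hi, patt_mul, hπ, crossInv_mul]
      simp [inversions_one]
    rw [h1, h2, pow_add]

/-- The total Mallows sum factorizes over the pattern at any window. -/
lemma total_factor (q : ℝ) (i : ℕ) (hi : i + m ≤ n) :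
    ∑ π : Perm (Fin n), q ^ inversions π
      = (∑ σ : Perm (Fin m), q ^ inversions σ) *
        ∑ π ∈ Finset.univ.filter (fun π : Perm (Fin n) => patt i hi π = 1), q ^ inversions π := by
  rw [← Finset.sum_fiberwise_of_maps_to (g := fun π => patt i hi π)
    (t := Finset.univ) (fun π _ => Finset.mem_univ _) (fun π => q ^ inversions π)]
  rw [Finset.sum_mul]
  refine Finset.sum_congr rfl (fun σ _ => ?_)
  exact class_sum q i hi σ

lemma patt_eq_one_iff (i : ℕ) (hi : i + m ≤ n) (π : Perm (Fin n)) :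
    patt i hi π = 1 ↔ ∀ a b : Fin m, a < b → π (wemb i hi a) < π (wemb i hi b) := by
  constructor
  · intro h a b hab
    have := (patt_lt_iff i hi π a b).1 (by rw [h]; simpa using hab)
    exact this
  · intro h
    symm
    apply perm_eq_of_lt_iff
    intro a b
    have hmono : StrictMono (fun a => π (wemb i hi a)) := fun a b hab => h a b hab
    rw [patt_lt_iff]
    simp only [Equiv.Perm.one_apply]
    exact (hmono.lt_iff_lt).symm

section Sorted

variable {k : ℕ}

lemma hk0 : 0 + k ≤ k + 1 := by omega

lemma wemb_last_ne (a : Fin k) : (wemb 0 (hk0) a : ℕ) < k := by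
  dsimp only [wemb_val]
  omega

lemma sorted_inversions (π : Perm (Fin (k+1))) (hπ : patt 0 hk0 π = 1) :
    inversions π = k - (π (Fin.last k) : ℕ) := by
  have hmono := (patt_eq_one_iff 0 hk0 π).1 hπ
  have hlast : ∀ p : Fin (k+1) × Fin (k+1),
      p.1 < p.2 → π p.2 < π p.1 → p.2 = Fin.last k := by
    intro p h1 h2
    by_contra hne
    have h2k : (p.2 : ℕ) < k := by
      have := p.2.isLt
      have : (p.2 : ℕ) ≠ k := fun h => hne (Fin.ext h)
      omega
    have h1k : (p.1 : ℕ) < k := lt_trans (Fin.lt_def.1 h1) h2k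
    have e1 : wemb 0 hk0 ⟨(p.1 : ℕ), h1k⟩ = p.1 := Fin.ext (by rw [wemb_val]; simp)
    have e2 : wemb 0 hk0 ⟨(p.2 : ℕ), h2k⟩ = p.2 := Fin.ext (by rw [wemb_val]; simp)
    have := hmono ⟨(p.1 : ℕ), h1k⟩ ⟨(p.2 : ℕ), h2k⟩ (Fin.mk_lt_mk.2 (Fin.lt_def.1 h1))
    rw [e1, e2] at this
    exact absurd h2 (not_lt.2 (le_of_lt this))
  rw [inversions]
  have hcard : (Finset.univ.filter (fun p : Fin (k+1) × Fin (k+1) =>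
      p.1 < p.2 ∧ π p.2 < π p.1)).card
      = (Finset.univ.filter (fun v : Fin (k+1) => π (Fin.last k) < v)).card := by
    refine Finset.card_bij (fun p _ => π p.1) ?_ ?_ ?_
    · intro p hp
      simp only [Finset.mem_filter, Finset.mem_univ, true_and] at hp ⊢
      obtain ⟨h1, h2⟩ := hp
      have := hlast p h1 h2
      rw [← this]
      exact h2
    · intro p hp p' hp' hval
      simp only [Finset.mem_filter, Finset.mem_univ, true_and] at hp hp'
      have e1 := hlast p hp.1 hp.2
      have e2 := hlast p' hp'.1 hp'.2
      have := π.injective hval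
      exact Prod.ext this (e1.trans e2.symm)
    · intro v hv
      simp only [Finset.mem_filter, Finset.mem_univ, true_and] at hv
      refine ⟨(π.symm v, Fin.last k), ?_, ?_⟩
      · simp only [Finset.mem_filter, Finset.mem_univ, true_and, Equiv.apply_symm_apply]
        constructor
        · have hne : π.symm v ≠ Fin.last k := by
            intro h
            have hvv : v = π (Fin.last k) := by rw [← h, Equiv.apply_symm_apply]
            rw [hvv] at hv
            exact lt_irrefl _ hv
          have : (π.symm v : ℕ) ≠ k := fun h => hne (Fin.ext h)
          have := (π.symm v).isLt
          exact Fin.lt_def.2 (by simp [Fin.last]; omega)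
        · exact hv
      · simp
  rw [hcard]
  have : (Finset.univ.filter (fun v : Fin (k+1) => π (Fin.last k) < v))
      = Finset.Ioi (π (Fin.last k)) := by
    ext v
    simp [Finset.mem_Ioi]
  rw [this, Fin.card_Ioi]
  omega

lemma sorted_unique (π π' : Perm (Fin (k+1))) (hπ : patt 0 hk0 π = 1)
    (hπ' : patt 0 hk0 π' = 1) (h : π (Fin.last k) = π' (Fin.last k)) : π = π' := by
  have hmono : StrictMono (fun a : Fin k => π (wemb 0 hk0 a)) :=
    fun a b hab => (patt_eq_one_iff 0 hk0 π).1 hπ a b hab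
  have hmono' : StrictMono (fun a : Fin k => π' (wemb 0 hk0 a)) :=
    fun a b hab => (patt_eq_one_iff 0 hk0 π').1 hπ' a b hab
  have hrange : ∀ τ : Perm (Fin (k+1)), τ (Fin.last k) = π (Fin.last k) →
      Set.range (fun a : Fin k => τ (wemb 0 hk0 a)) = {v | v ≠ π (Fin.last k)} := by
    intro τ hτ
    ext v
    constructor
    · rintro ⟨a, rfl⟩
      intro hv
      rw [← hτ] at hv
      have := τ.injective hv
      have := congrArg Fin.val this
      simp only [Fin.val_last] at this
      exact absurd this (Nat.ne_of_lt (wemb_last_ne a))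
    · intro hv
      have hne : τ.symm v ≠ Fin.last k := by
        intro hcon
        apply hv
        rw [← hτ, ← hcon]
        simp
      have hlt : (τ.symm v : ℕ) < k := by
        have := (τ.symm v).isLt
        have : (τ.symm v : ℕ) ≠ k := fun hc => hne (Fin.ext hc)
        omega
      refine ⟨⟨(τ.symm v : ℕ), hlt⟩, ?_⟩
      have e : wemb 0 hk0 (⟨(τ.symm v : ℕ), hlt⟩ : Fin k) = τ.symm v :=
        Fin.ext (by rw [wemb_val]; simp)
      simp only [e, Equiv.apply_symm_apply]
  haveI : WellFoundedLT (Fin k) := IsWellFounded.mk wellFounded_lt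
  have heq := (StrictMono.range_inj hmono hmono').1
    ((hrange π rfl).trans (hrange π' h.symm).symm)
  ext p
  rcases Nat.lt_or_ge (p : ℕ) k with hp | hp
  · have e : wemb 0 hk0 (⟨(p : ℕ), hp⟩ : Fin k) = p := Fin.ext (by rw [wemb_val]; simp)
    have := congrFun heq ⟨(p : ℕ), hp⟩
    simp only [e] at this
    exact congrArg Fin.val this
  · have : p = Fin.last k := Fin.ext (by have := p.isLt; simp [Fin.last]; omega)
    rw [this, h]

lemma sorted_exists (j : Fin (k+1)) :
    ∃ π : Perm (Fin (k+1)), patt 0 hk0 π = 1 ∧ π (Fin.last k) = j := by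
  classical
  set f : Fin (k+1) → Fin (k+1) := fun p =>
    if h : (p : ℕ) = k then j
    else if (p : ℕ) < (j : ℕ) then ⟨(p : ℕ), p.isLt⟩
    else ⟨(p : ℕ) + 1, by have := p.isLt; omega⟩ with hf
  have hval : ∀ p : Fin (k+1), (f p : ℕ) =
      if (p : ℕ) = k then (j : ℕ) else if (p : ℕ) < (j : ℕ) then (p : ℕ) else (p : ℕ) + 1 := by
    intro p
    simp only [hf]
    split_ifs <;> rfl
  have hinj : Function.Injective f := by
    intro p p' h
    have h' := congrArg Fin.val h
    rw [hval, hval] at h'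
    have := p.isLt
    have := p'.isLt
    have := j.isLt
    apply Fin.ext
    split_ifs at h' <;> omega
  have hbij : Function.Bijective f :=
    (Fintype.bijective_iff_injective_and_card f).2 ⟨hinj, rfl⟩
  refine ⟨Equiv.ofBijective f hbij, ?_, ?_⟩
  · rw [patt_eq_one_iff]
    intro a b hab
    simp only [Equiv.ofBijective_apply]
    rw [Fin.lt_def, hval, hval]
    have ha : (wemb 0 hk0 a : ℕ) = (a : ℕ) := by rw [wemb_val]; omega
    have hb : (wemb 0 hk0 b : ℕ) = (b : ℕ) := by rw [wemb_val]; omega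
    rw [ha, hb]
    have := a.isLt
    have := b.isLt
    have hab' : (a : ℕ) < (b : ℕ) := hab
    split_ifs <;> omega
  · simp only [Equiv.ofBijective_apply]
    apply Fin.ext
    rw [hval]
    simp [Fin.last]

lemma sorted_sum (q : ℝ) :
    ∑ π ∈ Finset.univ.filter (fun π : Perm (Fin (k+1)) => patt 0 hk0 π = 1),
      q ^ inversions π = qint q (k + 1) := by
  have h1 : ∑ π ∈ Finset.univ.filter (fun π : Perm (Fin (k+1)) => patt 0 hk0 π = 1),
      q ^ inversions π = ∑ j : Fin (k+1), q ^ (k - (j : ℕ)) := by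
    refine Finset.sum_bij (fun π _ => π (Fin.last k)) ?_ ?_ ?_ ?_
    · intro π hπ
      exact Finset.mem_univ _
    · intro π hπ π' hπ' h
      simp only [Finset.mem_filter, Finset.mem_univ, true_and] at hπ hπ'
      exact sorted_unique π π' hπ hπ' h
    · intro j _
      obtain ⟨π, h1, h2⟩ := sorted_exists j
      exact ⟨π, by simp [h1], h2⟩
    · intro π hπ
      simp only [Finset.mem_filter, Finset.mem_univ, true_and] at hπ
      rw [sorted_inversions π hπ]
  rw [h1, qint]
  rw [Fin.sum_univ_eq_sum_range (fun j => q ^ (k - j)) (k+1)]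
  rw [← Finset.sum_range_reflect (fun j => q ^ j) (k+1)]
  refine Finset.sum_congr rfl (fun j hj => ?_)
  simp only [Finset.mem_range] at hj
  congr 1

end Sorted

/-- The Mallows normalization: `∑_{π ∈ S_k} q^{inv π} = [k]_q!`. -/
lemma mallows_sum (q : ℝ) : ∀ k : ℕ, ∑ π : Perm (Fin k), q ^ inversions π = qfact q k := by
  intro k
  induction k with
  | zero =>
    have h : ∀ π : Perm (Fin 0), inversions π = 0 := by
      intro π
      simp [inversions]
    simp only [h, pow_zero]
    simp [qfact]
  | succ k ih =>
    rw [total_factor q 0 hk0, ih, sorted_sum q]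
    rw [qfact, qfact, Finset.prod_range_succ]

lemma qint_pos {q : ℝ} (hq : 0 < q) (k : ℕ) : 0 < qint q (k + 1) := by
  rw [qint]
  exact Finset.sum_pos (fun i _ => pow_pos hq i) Finset.nonempty_range_add_one

lemma qfact_pos {q : ℝ} (hq : 0 < q) (j : ℕ) : 0 < qfact q j :=
  Finset.prod_pos (fun i _ => qint_pos hq i)

end MWP2


/-- consecutive homogeneity: under Mallows(q) on `S_n`, the probability that
the window of length `m` starting at position `i` (0-indexed, `i + m ≤ n`) standardizes to
`σ` equals `q^{inv σ}/[m]_q!`, independently of `i` and `n`. -/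
theorem mallows_window_probability (m n : ℕ) (σ : Equiv.Perm (Fin m)) (q : ℝ)
    (hq : 0 < q) (i : ℕ) (hi : i + m ≤ n) :
    (∑ π ∈ Finset.univ.filter (fun π : Equiv.Perm (Fin n) => occursAt σ π i),
        q ^ inversions π) / qfact q n
      = q ^ inversions σ / qfact q m := by
  classical
  have hfil : (Finset.univ.filter (fun π : Equiv.Perm (Fin n) => occursAt σ π i))
      = Finset.univ.filter (fun π : Equiv.Perm (Fin n) => MWP2.patt i hi π = σ) :=
    Finset.filter_congr (fun π _ => by rw [MWP2.occursAt_iff i hi, eq_comm])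
  rw [hfil, MWP2.class_sum q i hi σ]
  have htot := MWP2.total_factor q i hi
  rw [MWP2.mallows_sum q n, MWP2.mallows_sum q m] at htot
  have hm := (MWP2.qfact_pos hq m).ne'
  have hn := (MWP2.qfact_pos hq n).ne'
  rw [div_eq_div_iff hn hm, htot]
  ring
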